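/- Let p : ℂ → ℂ be a polynomial function with p(0) = 1 and p'(0) = 1 (i.e. p(z) = 1 + z + O(z²)). Then there exist ε₀ > 0 and M₀ > 0 such that for every z = x + iy ∈ ℂ satisfying -M₀·ε₀² < x < -M₀·y² and |y| < ε₀, one has |p(z)| < 1. -/

import Mathlib

set_option maxHeartbeats 1000000

/-- Any stability polynomial `p` with `p(0) = 1` and `p'(0) = 1` (i.e.
`p(z) = 1 + z + O(z²)`) contains a parabolic region
`{z = x + iy : -M₀ε₀² < x < -M₀y², |y| < ε₀}` in the interior of its stability
region. -/
theorem stability_region_contains_parabolic_set (p : Polynomial ℂ)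
    (h0 : p.eval 0 = 1) (h1 : p.derivative.eval 0 = 1) :
    ∃ ε₀ > (0 : ℝ), ∃ M₀ > (0 : ℝ), ∀ z : ℂ,
      -(M₀ * ε₀ ^ 2) < z.re → z.re < -(M₀ * z.im ^ 2) → |z.im| < ε₀ →
      ‖p.eval z‖ < 1 := by
  have hc1 : p.coeff 1 = 1 := by
    have h := Polynomial.coeff_derivative p 0
    rw [Polynomial.coeff_zero_eq_eval_zero, h1] at h
    simpa using h.symm
  obtain ⟨r, hr⟩ : (Polynomial.X ^ 2 : Polynomial ℂ) ∣ (p - Polynomial.C 1 - Polynomial.X) := by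
    rw [Polynomial.X_pow_dvd_iff]
    intro d hd
    interval_cases d
    · simp [Polynomial.coeff_zero_eq_eval_zero, h0]
    · simp [Polynomial.coeff_sub, Polynomial.coeff_one, hc1]
  have hp : p = Polynomial.C 1 + Polynomial.X + Polynomial.X ^ 2 * r := by
    linear_combination hr
  have hev : ∀ z : ℂ, p.eval z = 1 + z + z ^ 2 * r.eval z := by
    intro z; rw [hp]; simp
  obtain ⟨C, hC⟩ := (isCompact_closedBall (0 : ℂ) 1).exists_bound_of_continuousOn
    (r.continuous_aeval.continuousOn)
  set C' : ℝ := max C 1 with hC'def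
  have hC'1 : (1 : ℝ) ≤ C' := le_max_right _ _
  have hC'0 : (0 : ℝ) < C' := lt_of_lt_of_le one_pos hC'1
  have hCb : ∀ w : ℂ, ‖w‖ ≤ 1 → ‖r.eval w‖ ≤ C' := by
    intro w hw
    have := hC w (by simpa [Metric.mem_closedBall] using hw)
    simp only [Polynomial.coe_aeval_eq_eval] at this
    exact this.trans (le_max_left _ _)
  refine ⟨1 / (16 * C'), by positivity, 16 * C', by positivity, ?_⟩
  intro z hx1 hx2 hy
  set x := z.re with hxdef
  set y := z.im with hydef
  have hxneg : x < 0 := lt_of_lt_of_le hx2 (by nlinarith [sq_nonneg y])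
  have hxlb : -x < 1 / (16 * C') := by
    have he : (16 * C') * (1 / (16 * C')) ^ 2 = 1 / (16 * C') := by
      field_simp
    rw [he] at hx1; linarith
  have hxs : -x ≤ 1 / 16 := by
    have : 1 / (16 * C') ≤ 1 / 16 := by
      gcongr <;> linarith
    linarith
  have hy2 : y ^ 2 < -x / (16 * C') := by
    rw [lt_div_iff₀ (by positivity)]
    nlinarith
  have hy16 : y ^ 2 < -x / 16 := by
    have : -x / (16 * C') ≤ -x / 16 := by
      gcongr <;> linarith
    linarith
  have hkey : (-x) * (16 * C') < 1 := (lt_div_iff₀ (by positivity)).mp hxlb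
  have hx2' : x ^ 2 ≤ -x / (16 * C') := by
    rw [le_div_iff₀ (by positivity)]
    nlinarith [hkey, hxneg]
  have hx16 : x ^ 2 ≤ -x / 16 := by
    have : -x / (16 * C') ≤ -x / 16 := by
      gcongr <;> linarith
    linarith
  set A := ‖1 + z‖ with hAdef
  set S := ‖z‖ with hSdef
  set B := ‖r.eval z‖ with hBdef
  have hA0 : 0 ≤ A := norm_nonneg _
  have hS0 : 0 ≤ S := norm_nonneg _
  have hB0 : 0 ≤ B := norm_nonneg _
  have hA2 : A ^ 2 = (1 + x) ^ 2 + y ^ 2 := by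
    rw [hAdef, Complex.sq_norm, Complex.normSq_apply]
    simp [hxdef, hydef]
    ring
  have hS2 : S ^ 2 = x ^ 2 + y ^ 2 := by
    rw [hSdef, Complex.sq_norm, Complex.normSq_apply]
    ring
  have hS1 : S ≤ 1 := by
    rw [← pow_le_one_iff_of_nonneg hS0 two_ne_zero]
    rw [hS2]; linarith
  have hBC : B ≤ C' := hCb z hS1
  have hfin : ‖p.eval z‖ ≤ A + S ^ 2 * B := by
    rw [hev z]
    calc ‖1 + z + z ^ 2 * r.eval z‖
        ≤ ‖1 + z‖ + ‖z ^ 2 * r.eval z‖ := norm_add_le _ _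
      _ = A + S ^ 2 * B := by rw [hAdef, hSdef, hBdef, norm_mul, norm_pow]
  clear_value A S B x y C'
  have hAsq : A ^ 2 ≤ (1 + x / 4) ^ 2 := by
    nlinarith [mul_nonneg (by linarith : (0:ℝ) ≤ 1/16 + x) (by linarith : (0:ℝ) ≤ -x)]
  have hA4 : A ≤ 1 + x / 4 := le_of_pow_le_pow_left₀ two_ne_zero (by linarith) hAsq
  have hxa : x ^ 2 * (16 * C') ≤ -x := (le_div_iff₀ (by positivity)).mp hx2'
  have hya : y ^ 2 * (16 * C') ≤ -x := ((lt_div_iff₀ (by positivity)).mp hy2).le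
  have hCS : C' * S ^ 2 ≤ -x / 8 := by
    rw [le_div_iff₀ (by norm_num : (0:ℝ) < 8), hS2]
    linarith
  have hSB : S ^ 2 * B ≤ S ^ 2 * C' := mul_le_mul_of_nonneg_left hBC (sq_nonneg S)
  have hSBx : S ^ 2 * B ≤ -x / 8 := by linarith
  calc ‖p.eval z‖ ≤ A + S ^ 2 * B := hfin
    _ ≤ (1 + x / 4) + (-x / 8) := by linarith [hSBx]
    _ < 1 := by linarith
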